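/- For ψ = f + φ with f continuously differentiable and φ convex real-valued, the vector ψ'(x; d_s(x))·d_s(x) belongs to ∂ψ(x), where d_s(x) is the steepest descent direction (equal to 0 when 0 ∈ ∂ψ(x)). -/

import Mathlib

open scoped RealInnerProductSpace

/-- The convex subdifferential of a real-valued function. -/
def subdiff {n : ℕ} (φ : EuclideanSpace ℝ (Fin n) → ℝ) (x : EuclideanSpace ℝ (Fin n)) :
    Set (EuclideanSpace ℝ (Fin n)) :=
  {v | ∀ y, φ x + ⟪v, y - x⟫ ≤ φ y}

lemma subdiff_nonempty {n : ℕ} (φ : EuclideanSpace ℝ (Fin n) → ℝ)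
    (hφ : ConvexOn ℝ Set.univ φ) (x : EuclideanSpace ℝ (Fin n)) :
    (subdiff φ x).Nonempty := by
  have hcont : Continuous φ :=
    continuousOn_univ.1 (hφ.continuousOn isOpen_univ)
  set s : Set (EuclideanSpace ℝ (Fin n) × ℝ) := {p | φ p.1 < p.2} with hs
  have hopen : IsOpen s := isOpen_lt (hcont.comp continuous_fst) continuous_snd
  have hconv : Convex ℝ s := by
    have := hφ.convex_strict_epigraph
    convert this using 1
    ext p; simp [hs]
  have hnot : (x, φ x) ∉ s := by simp [hs]
  obtain ⟨L, hL⟩ := geometric_hahn_banach_point_open hconv hopen hnot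
  set c : ℝ := L (0, 1) with hc
  have hsplit : ∀ (y : EuclideanSpace ℝ (Fin n)) (t : ℝ), L (y, t) = L (y, 0) + t * c := by
    intro y t
    have h : (y, t) = (y, (0:ℝ)) + t • ((0 : EuclideanSpace ℝ (Fin n)), (1:ℝ)) := by
      simp [Prod.ext_iff]
    rw [h, map_add, map_smul, smul_eq_mul]
  have hcpos : 0 < c := by
    have h1 := hL (x, φ x + 1) (by simp [hs])
    have e1 := hsplit x (φ x)
    have e2 := hsplit x (φ x + 1)
    rw [e1, e2] at h1
    linarith
  have hkey : ∀ y, L (x, 0) + c * φ x ≤ L (y, 0) + c * φ y := by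
    intro y
    by_contra h
    push_neg at h
    set ε := (L (x,0) + c * φ x - (L (y,0) + c * φ y)) / c with hε
    have hεpos : 0 < ε := div_pos (by linarith) hcpos
    have h2 := hL (y, φ y + ε) (by simp [hs, hεpos])
    rw [hsplit x (φ x), hsplit y (φ y + ε)] at h2
    have hce : c * ε = L (x,0) + c * φ x - (L (y,0) + c * φ y) := by
      rw [hε]; field_simp
    nlinarith
  set g : EuclideanSpace ℝ (Fin n) →L[ℝ] ℝ :=
    (-c⁻¹) • (L.comp (ContinuousLinearMap.inl ℝ (EuclideanSpace ℝ (Fin n)) ℝ)) with hg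
  set v := (InnerProductSpace.toDual ℝ (EuclideanSpace ℝ (Fin n))).symm g with hv
  refine ⟨v, fun y => ?_⟩
  have hvy : ⟪v, y - x⟫ = g (y - x) := InnerProductSpace.toDual_symm_apply
  have hgy : g (y - x) = (-c⁻¹) * (L (y - x, 0)) := by simp [hg]
  have hLyx : L (y - x, 0) = L (y, 0) - L (x, 0) := by
    have h : ((y - x : EuclideanSpace ℝ (Fin n)), (0:ℝ)) = (y, (0:ℝ)) - (x, (0:ℝ)) := by
      simp [Prod.ext_iff]
    rw [h, map_sub]
  have hk := hkey y
  rw [hvy, hgy, hLyx]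
  have hc' : c ≠ 0 := ne_of_gt hcpos
  have : -c⁻¹ * (L (y,0) - L (x,0)) ≤ φ y - φ x := by
    rw [neg_mul, neg_le, ← sub_nonneg]
    have h3 : c⁻¹ * ((L (y,0) + c * φ y) - (L (x,0) + c * φ x)) ≥ 0 :=
      mul_nonneg (inv_nonneg.2 hcpos.le) (by linarith)
    have h4 : c⁻¹ * ((L (y,0) + c * φ y) - (L (x,0) + c * φ x))
        = c⁻¹ * (L (y,0) - L (x,0)) + (φ y - φ x) := by
      field_simp; ring
    linarith [h4 ▸ h3]
  linarith

/-- For ψ = f + φ with f continuously differentiable and φ convex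
real-valued, the vector ψ'(x; d_s(x))·d_s(x) belongs to ∂ψ(x), where d_s(x) is the
steepest descent direction (equal to 0 when 0 ∈ ∂ψ(x)) and
ψ'(x;d) = sup_{v ∈ ∂ψ(x)} ⟨v, d⟩. -/
theorem steepest_descent_in_subdiff {n : ℕ}
    (f φ : EuclideanSpace ℝ (Fin n) → ℝ)
    (hf : ContDiff ℝ 1 f) (hφ : ConvexOn ℝ Set.univ φ)
    (x : EuclideanSpace ℝ (Fin n))
    (S : Set (EuclideanSpace ℝ (Fin n)))
    (hS : S = (fun v => gradient f x + v) '' subdiff φ x)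
    -- D d = ψ'(x; d) = sup_{v ∈ S} ⟨v, d⟩
    (D : EuclideanSpace ℝ (Fin n) → ℝ)
    (hD : ∀ d, D d = sSup ((fun v => ⟪v, d⟫) '' S))
    -- ds is the steepest descent direction
    (ds : EuclideanSpace ℝ (Fin n))
    (hds0 : (0 : EuclideanSpace ℝ (Fin n)) ∈ S → ds = 0)
    (hds : (0 : EuclideanSpace ℝ (Fin n)) ∉ S →
      ‖ds‖ ≤ 1 ∧ ∀ d, ‖d‖ ≤ 1 → D ds ≤ D d) :
    D ds • ds ∈ S := by
  by_cases h0 : (0 : EuclideanSpace ℝ (Fin n)) ∈ S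
  · rw [hds0 h0, smul_zero]; exact h0
  obtain ⟨hds1, hdsmin⟩ := hds h0
  -- S is nonempty, closed, convex
  have hSne : S.Nonempty := by
    obtain ⟨w, hw⟩ := subdiff_nonempty φ hφ x
    exact ⟨gradient f x + w, hS ▸ ⟨w, hw, rfl⟩⟩
  have hmemS : ∀ v, v ∈ S ↔ v - gradient f x ∈ subdiff φ x := by
    intro v
    rw [hS]
    constructor
    · rintro ⟨w, hw, rfl⟩; simpa using hw
    · intro h; exact ⟨v - gradient f x, h, by module⟩
  have hsubc : IsClosed (subdiff φ x) := by
    have : subdiff φ x = ⋂ y, {v | φ x + ⟪v, y - x⟫ ≤ φ y} := by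
      ext v; simp [subdiff, Set.mem_iInter]
    rw [this]
    exact isClosed_iInter fun y =>
      isClosed_le (continuous_const.add ((continuous_id.inner continuous_const))) continuous_const
  have hSclosed : IsClosed S := by
    have : S = (fun v => v - gradient f x) ⁻¹' subdiff φ x := by
      ext v; exact hmemS v
    rw [this]
    exact hsubc.preimage (continuous_id.sub continuous_const)
  have hsubconv : Convex ℝ (subdiff φ x) := by
    intro a ha b hb p q hp hq hpq
    intro y
    have hay := ha y
    have hby := hb y
    have : ⟪p • a + q • b, y - x⟫ = p * ⟪a, y - x⟫ + q * ⟪b, y - x⟫ := by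
      rw [inner_add_left, real_inner_smul_left, real_inner_smul_left]
    rw [this]
    have h1 := mul_le_mul_of_nonneg_left hay hp
    have h2 := mul_le_mul_of_nonneg_left hby hq
    have h3 : p * φ y + q * φ y = φ y := by rw [← add_mul, hpq, one_mul]
    have h4 : p * φ x + q * φ x = φ x := by rw [← add_mul, hpq, one_mul]
    nlinarith
  have hSconv : Convex ℝ S := by
    have : S = (fun v => v - gradient f x) ⁻¹' subdiff φ x := by
      ext v; exact hmemS v
    rw [this]
    intro a ha b hb p q hp hq hpq
    have h := hsubconv ha hb hp hq hpq
    have e : (p + q) • gradient f x = gradient f x := by rw [hpq, one_smul]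
    have e2 : p • (a - gradient f x) + q • (b - gradient f x)
        = p • a + q • b - (p + q) • gradient f x := by module
    rw [hpq, one_smul] at e2
    show p • a + q • b - gradient f x ∈ subdiff φ x
    rw [← e2]; exact h
  -- bddAbove of the inner-image sets
  have hbdd : ∀ d, BddAbove ((fun v => ⟪v, d⟫) '' S) := by
    intro d
    refine ⟨⟪gradient f x, d⟫ + (φ (x + d) - φ x), ?_⟩
    rintro r ⟨v, hv, rfl⟩
    have hw := (hmemS v).1 hv (x + d)
    have : ⟪v - gradient f x, x + d - x⟫ = ⟪v, d⟫ - ⟪gradient f x, d⟫ := by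
      rw [inner_sub_left]
      congr 1 <;> (congr 1; abel)
    rw [this] at hw
    linarith
  -- projection of 0 onto S
  obtain ⟨vb, hvbS, hvbmin⟩ := exists_norm_eq_iInf_of_complete_convex hSne
    (hSclosed.isComplete) hSconv 0
  have hvar : ∀ w ∈ S, ‖vb‖ ^ 2 ≤ ⟪vb, w⟫ := by
    intro w hw
    have := (norm_eq_iInf_iff_real_inner_le_zero hSconv hvbS).1 hvbmin w hw
    have h2 : ⟪(0:EuclideanSpace ℝ (Fin n)) - vb, w - vb⟫
        = -⟪vb, w⟫ + ‖vb‖ ^ 2 := by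
      rw [zero_sub, inner_neg_left, inner_sub_right, real_inner_self_eq_norm_sq]
      ring
    rw [h2] at this
    linarith
  have hvbne : vb ≠ 0 := fun h => h0 (h ▸ hvbS)
  set r := ‖vb‖ with hr
  have hrpos : 0 < r := norm_pos_iff.2 hvbne
  -- candidate direction
  set d' : EuclideanSpace ℝ (Fin n) := (-r⁻¹) • vb with hd'
  have hd'norm : ‖d'‖ = 1 := by
    rw [hd', norm_smul]
    simp [abs_of_pos (inv_pos.2 hrpos), hr]
    field_simp
  have hDd' : D d' = -r := by
    rw [hD]
    apply le_antisymm
    · apply csSup_le (hSne.image _)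
      rintro b ⟨v, hv, rfl⟩
      have := hvar v hv
      show ⟪v, d'⟫ ≤ -r
      rw [hd', real_inner_smul_right, real_inner_comm]
      have hv2 : r ^ 2 ≤ ⟪vb, v⟫ := this
      have e : r⁻¹ * r ^ 2 = r := by field_simp
      have := mul_le_mul_of_nonneg_left hv2 (inv_nonneg.2 hrpos.le)
      linarith
    · apply le_csSup (hbdd d')
      refine ⟨vb, hvbS, ?_⟩
      show ⟪vb, d'⟫ = -r
      rw [hd', real_inner_smul_right, real_inner_self_eq_norm_sq, ← hr]
      field_simp
  have hle : D ds ≤ -r := (hDd' ▸ hdsmin d' (le_of_eq hd'norm))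
  have hinnerlow : -r ≤ ⟪vb, ds⟫ := by
    have := abs_real_inner_le_norm vb ds
    have h2 : ‖vb‖ * ‖ds‖ ≤ r := by
      rw [← hr]
      nlinarith
    have := abs_le.1 (le_trans (abs_real_inner_le_norm vb ds) h2)
    linarith [this.1]
  have hDlow : ⟪vb, ds⟫ ≤ D ds := by
    rw [hD]
    exact le_csSup (hbdd ds) ⟨vb, hvbS, rfl⟩
  have hDds : D ds = -r := le_antisymm hle (le_trans hinnerlow hDlow)
  have hinner : ⟪vb, ds⟫ = -r := le_antisymm (hDds ▸ hDlow) hinnerlow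
  -- norm of ds is 1
  have hds1' : ‖ds‖ = 1 := by
    have hcs := abs_real_inner_le_norm vb ds
    rw [hinner, abs_neg, abs_of_pos hrpos, ← hr] at hcs
    have : 1 ≤ ‖ds‖ := by
      by_contra h
      push_neg at h
      nlinarith [mul_lt_mul_of_pos_left h hrpos]
    linarith
  -- r • ds = -vb
  have hkey : r • ds = -vb := by
    have hnorm : ‖r • ds + vb‖ ^ 2 = 0 := by
      have e1 : ‖r • ds + vb‖ ^ 2 = ‖r • ds‖ ^ 2 + 2 * ⟪r • ds, vb⟫ + ‖vb‖ ^ 2 :=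
        norm_add_sq_real _ _
      have e2 : ⟪r • ds, vb⟫ = r * ⟪vb, ds⟫ := by
        rw [real_inner_smul_left, real_inner_comm]
      have e3 : ‖r • ds‖ = r * ‖ds‖ := by
        rw [norm_smul, Real.norm_eq_abs, abs_of_pos hrpos]
      rw [e1, e2, e3, hinner, hds1', ← hr]
      ring
    have h2 : r • ds + vb = 0 := by
      rwa [pow_eq_zero_iff (two_ne_zero), norm_eq_zero] at hnorm
    exact eq_neg_of_add_eq_zero_left h2
  rw [hDds, neg_smul, hkey]
  simpa using hvbS
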